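/- Let ε' ≥ 0, let λ̃ > 0, let a be a real number with a ≤ 1/2 - ε'²/2 - ε', and set û := 1/(1 + (1+ε')·λ̃). Let G₀, G₁ be real numbers satisfying G₁ ≤ G₀ - û·λ̃² - (1+ε')·û·λ̃ - log(1 - û·(1+ε')·λ̃). Then G₁ ≤ G₀ - a·λ̃²·û. (Algebraic chain establishing inequality (decreasefirstphaseintermediate1) in the proof of Lemma 2, First phase decrement; it shows the step size û satisfies the backtracking line-search exit condition.) -/

import Mathlib

/-- For `t ≥ 1`, `log t ≤ t/2 - 1/(2t)` (trapezoid bound for `∫ 1/x`). -/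
lemma log_le_half_sub_half_inv {t : ℝ} (ht : 1 ≤ t) :
    Real.log t ≤ t / 2 - 1 / (2 * t) := by
  set g : ℝ → ℝ := fun x => x / 2 - 1 / (2 * x) - Real.log x with hg
  have hder : ∀ x : ℝ, 0 < x →
      HasDerivAt g (1 / 2 - (-2 / (2 * x) ^ 2) - x⁻¹) x := by
    intro x hx
    have h1 : HasDerivAt (fun x : ℝ => x / 2) (1 / 2) x := by
      simpa using (hasDerivAt_id x).div_const 2
    have h2 : HasDerivAt (fun x : ℝ => 2 * x) 2 x := by
      simpa using (hasDerivAt_id x).const_mul 2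
    have h3 : HasDerivAt (fun x : ℝ => (2 * x)⁻¹) (-2 / (2 * x) ^ 2) x :=
      h2.inv (by positivity)
    have h4 : HasDerivAt Real.log x⁻¹ x := Real.hasDerivAt_log (ne_of_gt hx)
    have := (h1.sub (by simpa [one_div] using h3)).sub h4
    simpa [hg, one_div, Pi.sub_def] using this
  have hmono : MonotoneOn g (Set.Ici (1 : ℝ)) := by
    apply monotoneOn_of_deriv_nonneg (convex_Ici 1)
    · intro x hx
      have hx0 : (0 : ℝ) < x := lt_of_lt_of_le one_pos hx
      exact (hder x hx0).continuousAt.continuousWithinAt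
    · intro x hx
      rw [interior_Ici] at hx
      have hx0 : (0 : ℝ) < x := lt_trans one_pos hx
      exact (hder x hx0).differentiableAt.differentiableWithinAt
    · intro x hx
      rw [interior_Ici] at hx
      have hx0 : (0 : ℝ) < x := lt_trans one_pos hx
      rw [(hder x hx0).deriv]
      have : (1 : ℝ)/2 - -2/(2*x)^2 - x⁻¹ = (x - 1)^2 / (2 * x^2) := by
        field_simp; ring
      rw [this]; positivity
  have := hmono (Set.self_mem_Ici) (Set.mem_Ici.2 ht) ht
  simp only [hg, Real.log_one] at this
  linarith

/-- Algebraic chain establishing inequality (decreasefirstphaseintermediate1) in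
the proof of Lemma 2 (First phase decrement): with `û = 1/(1+(1+ε')λ̃)` and
`a ≤ 1/2 - ε'²/2 - ε'`, if `G₁ ≤ G₀ - û λ̃² - (1+ε') û λ̃ - log(1 - û(1+ε')λ̃)`,
then `G₁ ≤ G₀ - a λ̃² û`. -/
theorem first_phase_line_search_bound
    (ε' lamT a uhat G0 G1 : ℝ)
    (hε' : 0 ≤ ε') (hlamT : 0 < lamT)
    (ha : a ≤ 1/2 - ε' ^ 2 / 2 - ε')
    (huhat : uhat = 1 / (1 + (1 + ε') * lamT))
    (hG : G1 ≤ G0 - uhat * lamT ^ 2 - (1 + ε') * uhat * lamT -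
      Real.log (1 - uhat * ((1 + ε') * lamT))) :
    G1 ≤ G0 - a * lamT ^ 2 * uhat := by
  set z : ℝ := (1 + ε') * lamT with hz
  have hz0 : 0 < z := by positivity
  have h1z : 0 < 1 + z := by linarith
  have huz : 1 - uhat * z = 1 / (1 + z) := by
    rw [huhat]; field_simp; ring
  have hlog : Real.log (1 - uhat * z) = -Real.log (1 + z) := by
    rw [huz, one_div, Real.log_inv]
  rw [hlog] at hG
  have hlb : Real.log (1 + z) ≤ (1 + z) / 2 - 1 / (2 * (1 + z)) :=
    log_le_half_sub_half_inv (by linarith)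
  have hu : uhat * (1 + z) = 1 := by rw [huhat]; field_simp
  have key : G1 ≤ G0 - uhat * lamT ^ 2 - uhat * z + ((1 + z) / 2 - 1 / (2 * (1 + z))) := by
    have : (1 + ε') * uhat * lamT = uhat * z := by rw [hz]; ring
    linarith [hG, hlb, this ▸ hG]
  have hinv : 1 / (2 * (1 + z)) = uhat / 2 := by
    rw [huhat]; field_simp
  rw [hinv] at key
  have hfin : - (uhat * lamT ^ 2) - uhat * z + ((1 + z) / 2 - uhat / 2)
      ≤ - (a * lamT ^ 2 * uhat) := by
    have hupos : 0 < uhat := by rw [huhat]; positivity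
    nlinarith [mul_pos hupos h1z, sq_nonneg lamT, mul_pos (mul_pos hupos hlamT) hlamT,
      mul_nonneg (mul_nonneg hupos.le (sq_nonneg lamT)) hε']
  linarith
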